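/- The degenerate r-Whitney numbers of the second kind satisfy the recurrence W_{m,λ}^{(r)}(n+1,k) = W_{m,λ}^{(r)}(n,k−1) + (mk + r − nλ) W_{m,λ}^{(r)}(n,k), for all n ≥ 0 and k ≥ 1 (with the convention W_{m,λ}^{(r)}(n,j) = 0 for j < 0 or j > n, and W_{m,λ}^{(r)}(0,0) = 1). -/

import Mathlib

open Finset

/-- generalized falling factorial: (x)_{n,λ} = x(x-λ)···(x-(n-1)λ) -/
def dff (lam x : ℝ) (n : ℕ) : ℝ := ∏ i ∈ Finset.range n, (x - i * lam)

/-- generalized rising factorial: ⟨x⟩_{n,λ} = x(x+λ)···(x+(n-1)λ) -/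
def drf (lam x : ℝ) (n : ℕ) : ℝ := ∏ i ∈ Finset.range n, (x + i * lam)

lemma dff_succ (lam x : ℝ) (n : ℕ) :
    dff lam x (n + 1) = dff lam x n * (x - n * lam) := by
  simp [dff, Finset.prod_range_succ]

lemma dff_nat_self (k : ℕ) : dff 1 (k : ℝ) k = (k.factorial : ℝ) := by
  induction k with
  | zero => simp [dff]
  | succ k ih =>
    rw [dff, Finset.prod_range_succ']
    have h : ∀ i ∈ Finset.range k,
        (((k : ℕ) + 1 : ℕ) : ℝ) - (↑(i + 1)) * 1 = (k : ℝ) - i * 1 := by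
      intro i _; push_cast; ring
    rw [Finset.prod_congr rfl h]
    rw [dff] at ih
    rw [ih]
    push_cast [Nat.factorial_succ]
    ring

lemma dff_nat_eq_zero {j k : ℕ} (h : j < k) : dff 1 (j : ℝ) k = 0 := by
  apply Finset.prod_eq_zero (Finset.mem_range.mpr h)
  simp

lemma indep (N : ℕ) (c : ℕ → ℝ)
    (h : ∀ x : ℝ, ∑ j ∈ range N, c j * dff 1 x j = 0) :
    ∀ k, k < N → c k = 0 := by
  intro k
  induction k using Nat.strong_induction_on with
  | _ k ih =>
    intro hkN
    have h1 := h (k : ℝ)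
    rw [Finset.sum_eq_single_of_mem k (Finset.mem_range.mpr hkN)] at h1
    · rw [dff_nat_self] at h1
      have hfac : (k.factorial : ℝ) ≠ 0 := Nat.cast_ne_zero.mpr k.factorial_ne_zero
      exact (mul_eq_zero.mp h1).resolve_right hfac
    · intro j hj hjk
      rcases lt_or_gt_of_ne hjk with hlt | hgt
      · rw [ih j hlt (lt_trans hlt hkN)]; ring
      · rw [dff_nat_eq_zero hgt]; ring

theorem stmt9 (m : ℕ) (hm : 0 < m) (r : ℕ) (lam : ℝ) (W : ℕ → ℕ → ℝ)
    (hW : ∀ n : ℕ, ∀ x : ℝ,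
      dff lam ((m : ℝ) * x + r) n = ∑ k ∈ range (n + 1), W n k * (m : ℝ) ^ k * dff 1 x k)
    (hzero : ∀ n k : ℕ, n < k → W n k = 0)
    (hW00 : W 0 0 = 1) :
    ∀ n k : ℕ, 1 ≤ k →
      W (n + 1) k = W n (k - 1) + ((m : ℝ) * k + r - n * lam) * W n k := by
  intro n k hk
  by_cases hkn : k < n + 2
  · set D : ℕ → ℝ := fun j =>
      W (n + 1) j * (m : ℝ) ^ j - (if 1 ≤ j then W n (j - 1) else 0) * (m : ℝ) ^ j
        - ((m : ℝ) * j + r - n * lam) * W n j * (m : ℝ) ^ j with hD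
    have key : ∀ x : ℝ, ∑ j ∈ range (n + 2), D j * dff 1 x j = 0 := by
      intro x
      have expand : dff lam ((m : ℝ) * x + r) (n + 1)
          = ∑ j ∈ range (n + 1), (W n j * (m : ℝ) ^ (j + 1) * dff 1 x (j + 1)
              + ((m : ℝ) * j + r - n * lam) * W n j * (m : ℝ) ^ j * dff 1 x j) := by
        rw [dff_succ, hW n x, Finset.sum_mul]
        apply Finset.sum_congr rfl
        intro j _
        rw [dff_succ]
        push_cast
        ring
      have hB : ∑ j ∈ range (n + 2),
            (if 1 ≤ j then W n (j - 1) else 0) * (m : ℝ) ^ j * dff 1 x j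
          = ∑ j ∈ range (n + 1), W n j * (m : ℝ) ^ (j + 1) * dff 1 x (j + 1) := by
        rw [Finset.sum_range_succ']
        simp
      have hC : ∑ j ∈ range (n + 2),
            ((m : ℝ) * j + r - n * lam) * W n j * (m : ℝ) ^ j * dff 1 x j
          = ∑ j ∈ range (n + 1),
            ((m : ℝ) * j + r - n * lam) * W n j * (m : ℝ) ^ j * dff 1 x j := by
        rw [Finset.sum_range_succ, hzero n (n + 1) (by omega)]
        ring
      have split : ∑ j ∈ range (n + 2), D j * dff 1 x j
          = (∑ j ∈ range (n + 2), W (n + 1) j * (m : ℝ) ^ j * dff 1 x j)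
            - (∑ j ∈ range (n + 2),
                (if 1 ≤ j then W n (j - 1) else 0) * (m : ℝ) ^ j * dff 1 x j)
            - (∑ j ∈ range (n + 2),
                ((m : ℝ) * j + r - n * lam) * W n j * (m : ℝ) ^ j * dff 1 x j) := by
        rw [← Finset.sum_sub_distrib, ← Finset.sum_sub_distrib]
        apply Finset.sum_congr rfl
        intro j _
        simp only [hD]
        ring
      rw [split, hB, hC, ← hW (n + 1) x, expand, Finset.sum_add_distrib]
      ring
    have hDk := indep (n + 2) D key k hkn
    simp only [hD, if_pos hk] at hDk
    have hm' : ((m : ℝ)) ^ k ≠ 0 := pow_ne_zero _ (Nat.cast_ne_zero.mpr hm.ne')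
    have h2 : (W (n + 1) k - W n (k - 1) - ((m : ℝ) * k + r - n * lam) * W n k)
        * (m : ℝ) ^ k = 0 := by linear_combination hDk
    have h3 := (mul_eq_zero.mp h2).resolve_right hm'
    linarith
  · rw [hzero (n + 1) k (by omega), hzero n (k - 1) (by omega), hzero n k (by omega)]
    ring
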